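/- Let λ₁, λ₂, λ₃, λ₄ be nonzero complex numbers with |λ₁|² − 4|λ₄|² > 0. Define h : ℂ⁴ → ℂ by h(z) = λ₁ z₂²·conj(z₁) + λ₂ z₃²·conj(z₂) + λ₃ z₄²·conj(z₃) + λ₄ z₁²·conj(z₄), and F(z) = (λ₁ z₂², λ₂ z₃², λ₃ z₄², λ₄ z₁²) ∈ ℂ⁴. Then there exists a point z = (z₁, z₂, z₃, 0) ∈ ℂ⁴ with z ≠ 0 and h(z) = 0, and a nonzero vector v in the real span of {F(z), i·F(z)}, such that the real Fréchet derivative of h at z applied to v is zero. -/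

import Mathlib

/-- Example 2.5, case iii): for the foliation of `ℂ⁴` defined by the twisted vector field
`F(z) = (λ₁z₂², λ₂z₃², λ₃z₄², λ₄z₁²)`, if `|λ₁|² − 4|λ₄|² > 0` then the foliation fails
to be transversal to the polar variety `{h = 0}` at some point of the form
`(z₁, z₂, z₃, 0) ≠ 0`: there is a nonzero vector in the real span of `{F(z), i·F(z)}`
killed by the real Fréchet derivative of `h` at that point. -/
theorem stmt15 (l₁ l₂ l₃ l₄ : ℂ) (hl₁ : l₁ ≠ 0) (hl₂ : l₂ ≠ 0) (hl₃ : l₃ ≠ 0)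
    (hl₄ : l₄ ≠ 0) (hcond : ‖l₁‖ ^ 2 - 4 * ‖l₄‖ ^ 2 > 0)
    (h : (Fin 4 → ℂ) → ℂ)
    (hh : ∀ z : Fin 4 → ℂ,
      h z = l₁ * z 1 ^ 2 * (starRingEnd ℂ) (z 0) + l₂ * z 2 ^ 2 * (starRingEnd ℂ) (z 1)
        + l₃ * z 3 ^ 2 * (starRingEnd ℂ) (z 2) + l₄ * z 0 ^ 2 * (starRingEnd ℂ) (z 3))
    (F : (Fin 4 → ℂ) → (Fin 4 → ℂ))
    (hF : ∀ z : Fin 4 → ℂ, F z = ![l₁ * z 1 ^ 2, l₂ * z 2 ^ 2, l₃ * z 3 ^ 2, l₄ * z 0 ^ 2]) :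
    ∃ z : Fin 4 → ℂ, z 3 = 0 ∧ z ≠ 0 ∧ h z = 0 ∧
      ∃ v ∈ Submodule.span ℝ {F z, Complex.I • F z}, v ≠ 0 ∧ fderiv ℝ h z v = 0 := by
  classical
  set a : ℝ := ‖l₁‖ with ha_def
  set d : ℝ := ‖l₄‖ with hd_def
  have ha : 0 < a := norm_pos_iff.mpr hl₁
  have hcond' : 0 < a ^ 2 - 4 * d ^ 2 := hcond
  set e : ℝ := Real.sqrt (a ^ 2 - 4 * d ^ 2) with he_def
  have he2 : e ^ 2 = a ^ 2 - 4 * d ^ 2 := Real.sq_sqrt hcond'.le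
  have he0 : 0 ≤ e := Real.sqrt_nonneg _
  set t : ℝ := (a + e) / (2 * a) with ht_def
  have ht0 : 0 ≤ t := by positivity
  set s : ℝ := Real.sqrt t with hs_def
  have hs2 : (s : ℝ) ^ 2 = t := Real.sq_sqrt ht0
  -- the key real identity
  have keyR : d ^ 2 = a ^ 2 * (s ^ 2 - s ^ 4) := by
    have hs4 : s ^ 4 = t ^ 2 := by rw [show (4:ℕ) = 2*2 from rfl, pow_mul, hs2]
    rw [hs2, hs4, ht_def]
    field_simp
    linear_combination he2
  -- key complex identity
  have key : (starRingEnd ℂ) l₄ * l₄ = (starRingEnd ℂ) l₁ * l₁ * ((s:ℂ)^2 - (s:ℂ)^4) := by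
    rw [mul_comm ((starRingEnd ℂ) l₄), mul_comm ((starRingEnd ℂ) l₁), Complex.mul_conj,
      Complex.mul_conj]
    have : ((s:ℂ)^2 - (s:ℂ)^4) = ((s^2 - s^4 : ℝ) : ℂ) := by push_cast; ring
    rw [this, ← Complex.ofReal_mul]
    norm_cast
    rw [← Complex.sq_norm, ← Complex.sq_norm, ← ha_def, ← hd_def, ← keyR]
  obtain ⟨w, hw0⟩ : ∃ w : ℂ, w ^ 2 = -l₁ * (s:ℂ) / l₂ :=
    IsAlgClosed.exists_pow_nat_eq _ two_pos
  have hw : l₂ * w ^ 2 = -l₁ * (s:ℂ) := by rw [hw0]; field_simp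
  have hwc : (starRingEnd ℂ) l₂ * (starRingEnd ℂ) w ^ 2
      = -(starRingEnd ℂ) l₁ * (s:ℂ) := by
    have := congrArg (starRingEnd ℂ) hw
    simpa [map_mul, map_pow, Complex.conj_ofReal] using this
  set z : Fin 4 → ℂ := ![1, (s:ℂ), w, 0] with hz_def
  have hz0 : z 0 = 1 := rfl
  have hz1 : z 1 = (s:ℂ) := rfl
  have hz2 : z 2 = w := rfl
  have hz3 : z 3 = 0 := rfl
  refine ⟨z, hz3, ?_, ?_, ?_⟩
  · intro hzz
    have : z 0 = 0 := by rw [hzz]; rfl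
    rw [hz0] at this
    exact one_ne_zero this
  · rw [hh, hz0, hz1, hz2, hz3]
    simp only [map_one, map_zero, Complex.conj_ofReal, mul_one, mul_zero, zero_mul,
      add_zero, ne_eq, OfNat.ofNat_ne_zero, not_false_eq_true, zero_pow, one_pow]
    linear_combination (s:ℂ) * hw
  · -- the vector v
    refine ⟨(starRingEnd ℂ) l₁ • F z, ?_, ?_, ?_⟩
    · set c : ℂ := (starRingEnd ℂ) l₁ with hc_def
      have hrepr : c • F z = (c.re : ℝ) • F z + (c.im : ℝ) • (Complex.I • F z) := by
        funext j
        simp only [Pi.add_apply, Pi.smul_apply, smul_eq_mul, Complex.real_smul]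
        linear_combination (-(F z j)) * (Complex.re_add_im c)
      rw [hrepr]
      exact Submodule.add_mem _
        (Submodule.smul_mem _ _ (Submodule.subset_span (Set.mem_insert _ _)))
        (Submodule.smul_mem _ _ (Submodule.subset_span (Set.mem_insert_of_mem _ rfl)))
    · intro hv
      have h3 : ((starRingEnd ℂ) l₁ • F z) 3 = (starRingEnd ℂ) l₁ * (l₄ * z 0 ^ 2) := by
        rw [hF]; rfl
      rw [hv, hz0] at h3
      simp only [Pi.zero_apply, one_pow, mul_one] at h3
      rcases mul_eq_zero.mp h3.symm with h' | h'
      · exact hl₁ (by simpa using h')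
      · exact hl₄ h'
    · -- the derivative computation
      have hfun : h = (fun y : Fin 4 → ℂ => l₁ * (y 1 * y 1) * (starRingEnd ℂ) (y 0)
          + l₂ * (y 2 * y 2) * (starRingEnd ℂ) (y 1) + l₃ * (y 3 * y 3) * (starRingEnd ℂ) (y 2)
          + l₄ * (y 0 * y 0) * (starRingEnd ℂ) (y 3)) := by
        funext y; rw [hh]; ring
      have cj : ∀ k : Fin 4, HasFDerivAt (fun y : Fin 4 → ℂ => (starRingEnd ℂ) (y k))
          (Complex.conjCLE.toContinuousLinearMap.comp (ContinuousLinearMap.proj k)) z :=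
        fun k => Complex.conjCLE.toContinuousLinearMap.hasFDerivAt.comp z (hasFDerivAt_apply k z)
      have T : ∀ (l : ℂ) (j k : Fin 4), HasFDerivAt
          (fun y : Fin 4 → ℂ => l * (y j * y j) * (starRingEnd ℂ) (y k)) _ z :=
        fun l j k => (((hasFDerivAt_apply j z).mul (hasFDerivAt_apply j z)).const_mul l).mul (cj k)
      have H := (((T l₁ 1 0).add (T l₂ 2 1)).add (T l₃ 3 2)).add (T l₄ 0 3)
      rw [hfun]; erw [H.fderiv]
      simp only [ContinuousLinearMap.add_apply, ContinuousLinearMap.smul_apply,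
        ContinuousLinearMap.comp_apply, ContinuousLinearMap.coe_smul', Pi.smul_apply,
        ContinuousLinearMap.proj_apply, ContinuousLinearEquiv.coe_coe, Complex.conjCLE_apply,
        smul_eq_mul]
      rw [hF, hz_def]
      simp only [Matrix.cons_val_zero, Matrix.cons_val_one, Matrix.head_cons,
        Matrix.cons_val_two, Matrix.tail_cons, Matrix.cons_val_three, Pi.smul_apply,
        smul_eq_mul, map_mul, map_pow, map_one, map_zero, Complex.conj_ofReal,
        Complex.conj_conj, one_pow, mul_one, mul_zero, zero_mul, add_zero, zero_add,
        ne_eq, OfNat.ofNat_ne_zero, not_false_eq_true, zero_pow, Pi.mul_apply]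
      linear_combination (2 * l₁ * (starRingEnd ℂ) l₁ * (s:ℂ)
          + l₁ * (starRingEnd ℂ) l₂ * (starRingEnd ℂ) w ^ 2) * hw
        + (-(l₁^2) * (s:ℂ)) * hwc + l₁ * key
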